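/- Let $U\subset\mathbb{R}^d$ be an open convex set, $\Omega\subset\mathbb{R}^d$ open, and $f,F:\mathbb{R}^d\to[0,\infty)$ with $\{f>0\}=\Omega$, $\{F>0\}=U$, $F$ log-concave, $f$ continuous on $\Omega$, and $f=F$ almost everywhere. Then $\Omega\subseteq U$ and $|U\setminus\Omega|=0$. -/

import Mathlib

open MeasureTheory

/-- If `f` is continuous and positive exactly on the open set `Ω`, `F` is log-concave and
positive exactly on the open convex set `U`, and `f = F` almost everywhere, then
`Ω ⊆ U` and `U \ Ω` has Lebesgue measure zero. -/
theorem support_comparison_of_ae_eq (d : ℕ)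
    (U Ω : Set (EuclideanSpace ℝ (Fin d)))
    (hU : IsOpen U) (hUconv : Convex ℝ U) (hΩ : IsOpen Ω)
    (f F : EuclideanSpace ℝ (Fin d) → ℝ)
    (hfnn : ∀ x, 0 ≤ f x) (hFnn : ∀ x, 0 ≤ F x)
    (hfΩ : {x | 0 < f x} = Ω) (hFU : {x | 0 < F x} = U)
    (hFlc : ∀ x y : EuclideanSpace ℝ (Fin d), ∀ s ∈ Set.Icc (0 : ℝ) 1,
      F x ^ (1 - s) * F y ^ s ≤ F ((1 - s) • x + s • y))
    (hfc : ContinuousOn f Ω)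
    (hae : f =ᵐ[volume] F) :
    Ω ⊆ U ∧ volume (U \ Ω) = 0 := by
  have hne : volume {x | f x ≠ F x} = 0 := by
    exact ae_iff.mp hae
  -- Ω \ U is null
  have hΩU : volume (Ω \ U) = 0 := by
    refine measure_mono_null (fun x hx => ?_) hne
    have hfx : 0 < f x := by rw [← hfΩ] at hx; exact hx.1
    have hFx : F x = 0 := by
      have : ¬ 0 < F x := by rw [← hFU] at hx; exact hx.2
      exact le_antisymm (not_lt.mp this) (hFnn x)
    simp only [Set.mem_setOf_eq, hFx]
    exact ne_of_gt hfx
  -- U \ Ω is null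
  have hUΩ : volume (U \ Ω) = 0 := by
    refine measure_mono_null (fun x hx => ?_) hne
    have hFx : 0 < F x := by rw [← hFU] at hx; exact hx.1
    have hfx : f x = 0 := by
      have : ¬ 0 < f x := by rw [← hfΩ] at hx; exact hx.2
      exact le_antisymm (not_lt.mp this) (hfnn x)
    simp only [Set.mem_setOf_eq, hfx]
    exact ne_of_lt hFx
  refine ⟨fun x hx => ?_, hUΩ⟩
  -- get a ball around x inside Ω
  obtain ⟨r, hr, hball⟩ := Metric.isOpen_iff.mp hΩ x hx
  -- the ball is contained in the closure of U
  have hballcl : Metric.ball x r ⊆ closure U := by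
    intro y hy
    by_contra hyc
    obtain ⟨ε, hε, hsep⟩ : ∃ ε > 0, Metric.ball y ε ∩ U = ∅ := by
      have : ∃ ε > 0, ∀ z ∈ U, ¬ dist y z < ε := by
        simpa [Metric.mem_closure_iff, not_forall, not_exists] using hyc
      obtain ⟨ε, hε, h⟩ := this
      exact ⟨ε, hε, Set.eq_empty_iff_forall_notMem.mpr fun z hz =>
        h z hz.2 (by simpa [Metric.mem_ball, dist_comm] using hz.1)⟩
    have hopen : IsOpen (Metric.ball y ε ∩ Metric.ball x r) :=
      Metric.isOpen_ball.inter Metric.isOpen_ball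
    have hnonempty : (Metric.ball y ε ∩ Metric.ball x r).Nonempty :=
      ⟨y, Metric.mem_ball_self hε, hy⟩
    have hsub : Metric.ball y ε ∩ Metric.ball x r ⊆ Ω \ U := by
      intro z hz
      refine ⟨hball hz.2, fun hzU => ?_⟩
      exact Set.eq_empty_iff_forall_notMem.mp hsep z ⟨hz.1, hzU⟩
    have := hopen.measure_pos volume hnonempty
    exact absurd (measure_mono_null hsub hΩU) (ne_of_gt this)
  -- U ∩ ball x r is nonempty
  obtain ⟨u, huU, hud⟩ : ∃ u, u ∈ U ∧ u ∈ Metric.ball x r := by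
    by_contra h
    push_neg at h
    have hsub : Metric.ball x r ⊆ Ω \ U := fun z hz => ⟨hball hz, fun hzU => h z hzU hz⟩
    have := Metric.isOpen_ball.measure_pos volume ⟨x, Metric.mem_ball_self hr⟩
    exact absurd (measure_mono_null hsub hΩU) (ne_of_gt this)
  -- if x = u we are done
  by_cases hxu : x = u
  · exact hxu ▸ huU
  -- otherwise push past x: z = x + t • (x - u) stays in the ball, hence in closure U
  have hnorm : 0 < dist x u := dist_pos.mpr hxu
  set t : ℝ := r / (2 * dist x u) with ht
  have htpos : 0 < t := div_pos hr (by positivity)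
  set z := x + t • (x - u) with hz
  have hzball : z ∈ Metric.ball x r := by
    have : dist z x = t * dist x u := by
      simp only [hz, dist_eq_norm]
      rw [add_sub_cancel_left, norm_smul, Real.norm_eq_abs, abs_of_pos htpos, ← dist_eq_norm]
    rw [Metric.mem_ball, this, ht, div_mul_eq_mul_div, mul_comm]
    rw [div_lt_iff₀ (by positivity)]
    nlinarith [Metric.mem_ball.mp hud, dist_pos.mpr hxu]
  have hzcl : z ∈ closure U := hballcl hzball
  -- x = a • u + b • z with a = t/(1+t), b = 1/(1+t)
  have h1t : (0:ℝ) < 1 + t := by linarith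
  have hcombo : (t / (1 + t)) • u + (1 / (1 + t)) • z = x := by
    rw [hz, smul_add, smul_smul]
    have : (t / (1 + t)) • u + ((1 / (1 + t)) • x + (1 / (1 + t) * t) • (x - u)) =
        (t / (1 + t) - 1 / (1 + t) * t) • u + (1 / (1 + t) + 1 / (1 + t) * t) • x := by
      rw [smul_sub, sub_smul, add_smul]
      abel
    rw [this]
    have h1 : t / (1 + t) - 1 / (1 + t) * t = 0 := by ring
    have h2 : 1 / (1 + t) + 1 / (1 + t) * t = 1 := by field_simp
    rw [h1, h2, zero_smul, one_smul, zero_add]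
  have hxint : x ∈ interior U := by
    rw [← hcombo]
    refine hUconv.combo_interior_closure_mem_interior ?_ hzcl ?_ ?_ ?_
    · rwa [hU.interior_eq]
    · positivity
    · positivity
    · field_simp; ring
  rwa [hU.interior_eq] at hxint
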